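/- Let (T_n) be a scale, (ε_n) a controlling sequence, and R_∞ ⊆ ℕ a T-long ε-sparse tail. For every m ∈ ℕ let R_m be the union of the components of R_∞ of size T_m. Then for every m and every n ≥ 1, the density satisfies #(R_m ∩ [0, n−1]) / n < 3·ε_{m+1}. -/
import Mathlib


/-- `IsComponent R a b`: the interval of integers `[a,b]` is a maximal interval of
consecutive integers contained in `R` (a connected component of `R`). -/
def IsComponent (R : Set ℕ) (a b : ℕ) : Prop :=
  a ≤ b ∧ Set.Icc a b ⊆ R ∧ (∀ c, c + 1 = a → c ∉ R) ∧ b + 1 ∉ R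

/-- The union of the components of `R` of size (cardinality) exactly `L`. -/
def compUnion (R : Set ℕ) (L : ℕ) : Set ℕ :=
  {x | ∃ a b, IsComponent R a b ∧ b + 1 - a = L ∧ x ∈ Set.Icc a b}

/-- `R` is a `T`-long `ε`-sparse tail (see the paper's Definition of long sparse tail). -/
def IsSparseTail (T : ℕ → ℕ) (ε : ℕ → ℝ) (R : Set ℕ) : Prop :=
  (∀ a b, IsComponent R a b → ∃ k n, a = k * T n ∧ b = (k + 1) * T n - 1) ∧
  0 ∉ R ∧
  (∀ n k,
    ¬ (∃ a b, IsComponent R a b ∧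
        Set.Icc (k * T (n + 1)) ((k + 1) * T (n + 1) - 1) ⊆ Set.Icc a b) →
    (compUnion R (T n) ∩ Set.Icc (k * T (n + 1)) ((k + 1) * T (n + 1) - 1)).Nonempty ∧
    compUnion R (T n) ∩ Set.Icc (k * T (n + 1)) ((k + 1) * T (n + 1) - 1) ⊆
      Set.Icc (k * T (n + 1) + T (n + 1) / 3) ((k + 1) * T (n + 1) - 1 - T (n + 1) / 3) ∧
    ((compUnion R (T n) ∩
        Set.Icc (k * T (n + 1)) ((k + 1) * T (n + 1) - 1)).ncard : ℝ) <
      ε (n + 1) * T (n + 1))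

lemma comp_unique {R : Set ℕ} {a b a' b' x : ℕ} (h : IsComponent R a b)
    (h' : IsComponent R a' b') (hx : x ∈ Set.Icc a b) (hx' : x ∈ Set.Icc a' b') :
    a = a' ∧ b = b' := by
  obtain ⟨hab, hsub, hleft, hright⟩ := h
  obtain ⟨hab', hsub', hleft', hright'⟩ := h'
  obtain ⟨hx1, hx2⟩ := hx
  obtain ⟨hx1', hx2'⟩ := hx'
  have ha : a = a' := by
    rcases lt_trichotomy a a' with hlt | he | hgt
    · exact absurd (hsub ⟨by omega, by omega⟩) (hleft' (a' - 1) (by omega))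
    · exact he
    · exact absurd (hsub' ⟨by omega, by omega⟩) (hleft (a - 1) (by omega))
  have hb : b = b' := by
    rcases lt_trichotomy b b' with hlt | he | hgt
    · exact absurd (hsub' ⟨by omega, by omega⟩) hright
    · exact he
    · exact absurd (hsub ⟨by omega, by omega⟩) hright'
  exact ⟨ha, hb⟩

lemma ncard_biUnion_le' {α : Type*} (n : ℕ) (f : ℕ → Set α) :
    (⋃ k ∈ Finset.range n, f k).ncard ≤ ∑ k ∈ Finset.range n, (f k).ncard := by
  induction n with
  | zero => simp
  | succ n ih =>
    rw [Finset.sum_range_succ]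
    calc (⋃ k ∈ Finset.range (n+1), f k).ncard
        = ((⋃ k ∈ Finset.range n, f k) ∪ f n).ncard := by
          rw [Finset.range_add_one]; simp [Set.biUnion_insert, Set.union_comm]
      _ ≤ (⋃ k ∈ Finset.range n, f k).ncard + (f n).ncard := Set.ncard_union_le _ _
      _ ≤ _ := by omega

/-- density estimate for sparse tails: for every `m` and every `n ≥ 1`,
`#(R_m ∩ [0, n−1]) / n < 3 ε_{m+1}`, where `R_m` is the union of the components of the
tail of size `T m`. -/
theorem stmt4 (T κ : ℕ → ℕ) (hT0 : ∀ n, 0 < T n)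
    (hκ3 : ∀ n, 3 ≤ κ n)
    (hTκ : ∀ n, T (n + 1) = κ (n + 1) * T n)
    (ε : ℕ → ℝ) (hεpos : ∀ n, 0 < ε n) (hεsum : Summable ε)
    (R : Set ℕ) (hR : IsSparseTail T ε R) :
    ∀ m : ℕ, ∀ n : ℕ, 1 ≤ n →
      ((compUnion R (T m) ∩ Set.Iio n).ncard : ℝ) / n < 3 * ε (m + 1) := by
  intro m n hn
  set S := T (m + 1) with hSdef
  have hS : 0 < S := hT0 _
  have hTmS : T m < S := by
    have h1 := hκ3 (m + 1); have h2 := hT0 m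
    have h3 := hTκ m
    rw [hSdef, h3]; nlinarith
  set A : ℕ → Set ℕ := fun k => compUnion R (T m) ∩ Set.Icc (k * S) ((k + 1) * S - 1)
    with hAdef
  have hAfin : ∀ k, (A k).Finite :=
    fun k => (Set.finite_Icc _ _).subset Set.inter_subset_right
  -- intervals inside a big component contain no points of compUnion R (T m)
  have hAempty : ∀ k, (∃ a b, IsComponent R a b ∧
      Set.Icc (k * S) ((k + 1) * S - 1) ⊆ Set.Icc a b) → A k = ∅ := by
    intro k ⟨a, b, hcomp, hsub⟩
    ext x
    simp only [Set.mem_empty_iff_false, iff_false]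
    rintro ⟨⟨a', b', hcomp', hlen, hx⟩, hxI⟩
    have hxab : x ∈ Set.Icc a b := hsub hxI
    obtain ⟨ha, hb⟩ := comp_unique hcomp hcomp' hxab hx
    have hIc : k * S ≤ (k + 1) * S - 1 := by
      have : k * S + S = (k + 1) * S := by ring
      omega
    have h1 : a ≤ k * S := (hsub ⟨le_refl _, hIc⟩).1
    have h2 : (k + 1) * S - 1 ≤ b := (hsub ⟨hIc, le_refl _⟩).2
    have h3 : k * S + S ≤ (k + 1) * S := by ring_nf; omega
    omega
  have hAcard : ∀ k, ((A k).ncard : ℝ) < ε (m + 1) * S := by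
    intro k
    by_cases h : ∃ a b, IsComponent R a b ∧
        Set.Icc (k * S) ((k + 1) * S - 1) ⊆ Set.Icc a b
    · rw [hAempty k h]
      simp only [Set.ncard_empty, Nat.cast_zero]
      have := hεpos (m + 1)
      positivity
    · exact (hR.2.2 m k h).2.2
  have hmem : ∀ x, x ∈ compUnion R (T m) → x ∈ A (x / S) := by
    intro x hx
    refine ⟨hx, Nat.div_mul_le_self x S, ?_⟩
    have h2 : x < (x / S + 1) * S := by
      calc x = S * (x / S) + x % S := (Nat.div_add_mod x S).symm
        _ < S * (x / S) + S := Nat.add_lt_add_left (Nat.mod_lt x hS) _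
        _ = (x / S + 1) * S := by ring
    omega
  set K := (n - 1) / S with hKdef
  have hdivle : ∀ x, x < n → x / S ≤ K := by
    intro x hx
    exact Nat.div_le_div_right (by omega)
  have hεp := hεpos (m + 1)
  have hnR : (0 : ℝ) < n := by exact_mod_cast hn
  rw [div_lt_iff₀ hnR]
  by_cases hcase : (A K ∩ Set.Iio n).Nonempty
  · -- last interval meets the set: use middle-third to bound n from below
    obtain ⟨x, hxA, hxn⟩ := hcase
    have hne : ¬ (∃ a b, IsComponent R a b ∧
        Set.Icc (K * S) ((K + 1) * S - 1) ⊆ Set.Icc a b) := by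
      intro h
      rw [hAempty K h] at hxA
      exact hxA
    have hmid := (hR.2.2 m K hne).2.1 hxA
    have hx3 : K * S + S / 3 ≤ x := hmid.1
    have hxn' : x < n := hxn
    have hkey : (K + 1) * S < 3 * n := by
      have h3 : S < 3 * (S / 3) + 3 := by omega
      have hexp : (K + 1) * S = K * S + S := by ring
      nlinarith [Nat.zero_le (K * S)]
    have hcover : compUnion R (T m) ∩ Set.Iio n ⊆ ⋃ k ∈ Finset.range (K + 1), A k := by
      rintro x ⟨hx1, hx2⟩
      simp only [Set.mem_iUnion, Finset.mem_range]
      exact ⟨x / S, by have := hdivle x hx2; omega, hmem x hx1⟩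
    have h1 : (compUnion R (T m) ∩ Set.Iio n).ncard ≤
        ∑ k ∈ Finset.range (K + 1), (A k).ncard :=
      le_trans (Set.ncard_le_ncard hcover
        ((Finset.range (K + 1)).finite_toSet.biUnion fun k _ => hAfin k))
        (ncard_biUnion_le' _ _)
    have hsum : ((compUnion R (T m) ∩ Set.Iio n).ncard : ℝ) <
        (K + 1) * (ε (m + 1) * S) := by
      calc ((compUnion R (T m) ∩ Set.Iio n).ncard : ℝ)
          ≤ ∑ k ∈ Finset.range (K + 1), ((A k).ncard : ℝ) := by
            push_cast
            exact_mod_cast h1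
        _ < ∑ _k ∈ Finset.range (K + 1), ε (m + 1) * S :=
            Finset.sum_lt_sum_of_nonempty (by simp) fun k _ => hAcard k
        _ = (K + 1) * (ε (m + 1) * S) := by
            rw [Finset.sum_const, Finset.card_range]; push_cast; ring
    have hkeyR : ((K : ℝ) + 1) * S < 3 * n := by exact_mod_cast hkey
    nlinarith [hS, (by exact_mod_cast hS : (0:ℝ) < (S:ℝ))]
  · -- last interval misses the set
    have hcover : compUnion R (T m) ∩ Set.Iio n ⊆ ⋃ k ∈ Finset.range K, A k := by
      rintro x ⟨hx1, hx2⟩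
      simp only [Set.mem_iUnion, Finset.mem_range]
      have hle := hdivle x hx2
      have hxA := hmem x hx1
      rcases lt_or_eq_of_le hle with hlt | heq
      · exact ⟨x / S, hlt, hxA⟩
      · exact absurd ⟨x, by rw [← heq]; exact hxA, hx2⟩ hcase
    by_cases hK : K = 0
    · have : compUnion R (T m) ∩ Set.Iio n = ∅ := by
        rw [hK] at hcover
        simpa using Set.subset_empty_iff.mp (by simpa using hcover)
      rw [this]
      simp only [Set.ncard_empty, Nat.cast_zero]
      positivity
    · have hKS : K * S < n := by
        have h := Nat.div_mul_le_self (n - 1) S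
        rw [← hKdef] at h
        omega
      have h1 : (compUnion R (T m) ∩ Set.Iio n).ncard ≤
          ∑ k ∈ Finset.range K, (A k).ncard :=
        le_trans (Set.ncard_le_ncard hcover
          ((Finset.range K).finite_toSet.biUnion fun k _ => hAfin k))
          (ncard_biUnion_le' _ _)
      have hsum : ((compUnion R (T m) ∩ Set.Iio n).ncard : ℝ) <
          K * (ε (m + 1) * S) := by
        calc ((compUnion R (T m) ∩ Set.Iio n).ncard : ℝ)
            ≤ ∑ k ∈ Finset.range K, ((A k).ncard : ℝ) := by
              push_cast
              exact_mod_cast h1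
          _ < ∑ _k ∈ Finset.range K, ε (m + 1) * S :=
              Finset.sum_lt_sum_of_nonempty
                (Finset.nonempty_range_iff.mpr hK) fun k _ => hAcard k
          _ = K * (ε (m + 1) * S) := by
              rw [Finset.sum_const, Finset.card_range]; push_cast; ring
      have hKSR : (K : ℝ) * S < n := by exact_mod_cast hKS
      nlinarith
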